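/- Rigidity of local maps between standard complexes with common prefix: if the parameter sequences of standard complexes C = C(a_i,b_i) and C' = C(a_i',b_i') agree up to index k, and f : C → C' is a local map, then for every 0 ≤ i ≤ k the image f(T_i) is supported by T_i' (i.e., the coefficient of T_i' in f(T_i), written in the standard basis, is a nonzero element of F[U] with nonzero constant term where applicable). -/

import Mathlib

open Polynomial

abbrev F2 : Type := ZMod 2
abbrev R : Type := Polynomial F2

noncomputable section

namespace AI

/-- The variable `U`. -/
def Uu : R := Polynomial.X

/-- The free `R`-module of rank `n`. -/
abbrev V (n : ℕ) : Type := Fin n → R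

/-- The `i`-th standard basis vector. -/
def e {n : ℕ} (i : Fin n) : V n := fun j => if j = i then 1 else 0

/-- The `i`-th standard basis vector over `F2`. -/
def e2 {n : ℕ} (i : Fin n) : Fin n → F2 := fun j => if j = i then 1 else 0

/-- `x` lies in the image of multiplication by `U`. -/
def modU {n : ℕ} (x : V n) : Prop := ∀ j, (x j).coeff 0 = 0

/-- `x` is homogeneous of degree `c` with respect to the generator gradings `gr`
(where `deg U = -2`). -/
def IsHomog {n : ℕ} (gr : Fin n → ℤ) (c : ℤ) (x : V n) : Prop :=
  ∀ (j : Fin n) (m : ℕ), (x j).coeff m ≠ 0 → gr j - 2 * (m : ℤ) = c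

/-- `f` is a graded `R`-linear map of degree `dg`. -/
def GradedMap {m n : ℕ} (gr₁ : Fin m → ℤ) (gr₂ : Fin n → ℤ) (dg : ℤ)
    (f : V m →ₗ[R] V n) : Prop :=
  ∀ i : Fin m, IsHomog gr₂ (gr₁ i + dg) (f (e i))

/-- The raw data of a free finitely generated `ℤ`-graded complex over `R = F[U]`. -/
structure PreCplx where
  n : ℕ
  gr : Fin n → ℤ
  d : V n →ₗ[R] V n

def IsCycle (C : PreCplx) (x : V C.n) : Prop := C.d x = 0

def IsBdry (C : PreCplx) (x : V C.n) : Prop := ∃ y, C.d y = x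

/-- `x` is a cycle representing a `U`-nontorsion homology class. -/
def NontorsionClass (C : PreCplx) (x : V C.n) : Prop :=
  IsCycle C x ∧ ∀ k : ℕ, ¬ IsBdry C ((Uu ^ k) • x)

/-- `U⁻¹H_*(C) ≅ F[U, U⁻¹]`, generated by a degree-zero cycle (normalization
convention: the maximal degree of a `U`-nontorsion cycle class is zero, so the
localized homology is supported in even degrees). -/
def HtowerCond (C : PreCplx) : Prop :=
  ∃ x : V C.n, IsCycle C x ∧ IsHomog C.gr 0 x ∧
    (∀ k : ℕ, ¬ IsBdry C ((Uu ^ k) • x)) ∧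
    (∀ y : V C.n, IsCycle C y →
      ∃ (k : ℕ) (p : R) (z : V C.n), (Uu ^ k) • y = p • x + C.d z)

/-- `C` is a genuine graded chain complex. -/
def IsCplx (C : PreCplx) : Prop :=
  GradedMap C.gr C.gr (-1) C.d ∧ C.d ∘ₗ C.d = 0

/-- `f` and `g` are homotopic mod `U`. -/
def HomotopicModU (C₁ C₂ : PreCplx) (f g : V C₁.n →ₗ[R] V C₂.n) : Prop :=
  ∃ H : V C₁.n →ₗ[R] V C₂.n, GradedMap C₁.gr C₂.gr 1 H ∧
    ∀ x, modU ((f + g + H ∘ₗ C₁.d + C₂.d ∘ₗ H) x)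

/-- The raw data of an almost ι-complex. -/
structure PreAI extends PreCplx where
  ι : V n →ₗ[R] V n

/-- `ω = 1 + ι`. -/
def omega (C : PreAI) : V C.n →ₗ[R] V C.n := LinearMap.id + C.ι

/-- `C` is an almost ι-complex. -/
def IsAICplx (C : PreAI) : Prop :=
  IsCplx C.toPreCplx ∧
  GradedMap C.gr C.gr 0 C.ι ∧
  (∀ x, modU ((C.ι ∘ₗ C.d + C.d ∘ₗ C.ι) x)) ∧
  HomotopicModU C.toPreCplx C.toPreCplx (C.ι ∘ₗ C.ι) LinearMap.id ∧
  HtowerCond C.toPreCplx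

/-- `C` is a genuine ι-complex: `ι` is an honest chain map whose square is
genuinely chain homotopic to the identity. -/
def IsIotaCplx (C : PreAI) : Prop :=
  IsCplx C.toPreCplx ∧
  GradedMap C.gr C.gr 0 C.ι ∧
  C.ι ∘ₗ C.d = C.d ∘ₗ C.ι ∧
  (∃ H : V C.n →ₗ[R] V C.n, GradedMap C.gr C.gr 1 H ∧
    C.ι ∘ₗ C.ι + LinearMap.id = H ∘ₗ C.d + C.d ∘ₗ H) ∧
  HtowerCond C.toPreCplx

/-- A reduced complex: the differential vanishes mod `U`. -/
def Reduced (C : PreAI) : Prop := ∀ x, modU (C.d x)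

/-- `f` is an almost ι-morphism. -/
def isAIMorphism (C₁ C₂ : PreAI) (f : V C₁.n →ₗ[R] V C₂.n) : Prop :=
  GradedMap C₁.gr C₂.gr 0 f ∧
  f ∘ₗ C₁.d = C₂.d ∘ₗ f ∧
  HomotopicModU C₁.toPreCplx C₂.toPreCplx (f ∘ₗ C₁.ι) (C₂.ι ∘ₗ f)

/-- A local map: an almost ι-morphism inducing an isomorphism on `U`-localized
homology (equivalently, with the normalization conventions in force, preserving
`U`-nontorsion cycle classes). -/
def isLocalMap (C₁ C₂ : PreAI) (f : V C₁.n →ₗ[R] V C₂.n) : Prop :=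
  isAIMorphism C₁ C₂ f ∧
  ∀ x, NontorsionClass C₁.toPreCplx x → NontorsionClass C₂.toPreCplx (f x)

/-- Local equivalence of almost ι-complexes. -/
def LocallyEquiv (C₁ C₂ : PreAI) : Prop :=
  (∃ f, isLocalMap C₁ C₂ f) ∧ (∃ g, isLocalMap C₂ C₁ g)

/-- The tensor product (over `R`) of linear maps between free modules,
in the bases indexed by `finProdFinEquiv`. -/
def tmap {m n m' n' : ℕ} (f : V m →ₗ[R] V m') (g : V n →ₗ[R] V n') :
    V (m * n) →ₗ[R] V (m' * n') where
  toFun x := fun p => ∑ q : Fin (m * n),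
    x q * f (e (finProdFinEquiv.symm q).1) (finProdFinEquiv.symm p).1
        * g (e (finProdFinEquiv.symm q).2) (finProdFinEquiv.symm p).2
  map_add' x y := by
    funext p
    simp [Pi.add_apply, add_mul, Finset.sum_add_distrib]
  map_smul' c x := by
    funext p
    simp only [RingHom.id_apply, Pi.smul_apply, smul_eq_mul, Finset.mul_sum]
    exact Finset.sum_congr rfl fun q _ => by ring

/-- The tensor product of complexes. -/
def tensorPre (C₁ C₂ : PreCplx) : PreCplx where
  n := C₁.n * C₂.n
  gr := fun q => C₁.gr (finProdFinEquiv.symm q).1 + C₂.gr (finProdFinEquiv.symm q).2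
  d := tmap C₁.d LinearMap.id + tmap LinearMap.id C₂.d

/-- The tensor product of almost ι-complexes. -/
def tensorAI (C₁ C₂ : PreAI) : PreAI where
  toPreCplx := tensorPre C₁.toPreCplx C₂.toPreCplx
  ι := tmap C₁.ι C₂.ι

/-- The transpose of a square matrix map (the dual map in the dual basis). -/
def tr {n : ℕ} (f : V n →ₗ[R] V n) : V n →ₗ[R] V n where
  toFun x := fun j => ∑ i : Fin n, x i * f (e j) i
  map_add' x y := by
    funext j
    simp [Pi.add_apply, add_mul, Finset.sum_add_distrib]
  map_smul' c x := by
    funext j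
    simp only [RingHom.id_apply, Pi.smul_apply, smul_eq_mul, Finset.mul_sum]
    exact Finset.sum_congr rfl fun i _ => by ring

/-- The dual complex. -/
def dualPre (C : PreCplx) : PreCplx where
  n := C.n
  gr := fun i => -C.gr i
  d := tr C.d

/-- The dual almost ι-complex. -/
def dualAI (C : PreAI) : PreAI where
  toPreCplx := dualPre C.toPreCplx
  ι := tr C.ι

/-- The trivial complex `C(0) = (F[U], ∂ = 0, ι = id)`. -/
def cZero : PreAI := ⟨⟨1, fun _ => 0, 0⟩, LinearMap.id⟩

/-- The contraction map `C ⊗ C^∨ → F[U]`, `x ⊗ y ↦ y(x)`. -/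
def contr (n : ℕ) : V (n * n) →ₗ[R] V 1 where
  toFun x := fun _ => ∑ i : Fin n, x (finProdFinEquiv (i, i))
  map_add' x y := by funext j; simp [Pi.add_apply, Finset.sum_add_distrib]
  map_smul' c x := by
    funext j
    simp only [RingHom.id_apply, Pi.smul_apply, smul_eq_mul, Finset.mul_sum]

/-! ### Standard and augmented complexes -/

/-- The `i`-th symbol (0-indexed) of the parameter sequence, padded by zeros. -/
def seqAt (M : List ℤ) (i : ℕ) : ℤ := M.getD i 0

/-- Grading step of a `b`-arrow. -/
def bstep (b : ℤ) : ℤ := (if 0 < b then 1 else -1) - 2 * b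

/-- Grading of the generator `T_i` of the standard/augmented complex. -/
def stdGr (M : List ℤ) (i : ℕ) : ℤ :=
  ∑ s ∈ Finset.range i, if s % 2 = 1 then bstep (seqAt M s) else 0

/-- A linear endomorphism of `V n` given by a matrix of coefficients. -/
def ofMatrix {n : ℕ} (c : ℕ → ℕ → R) : V n →ₗ[R] V n where
  toFun x := fun j => ∑ i : Fin n, x i * c i j
  map_add' x y := by
    funext j
    simp [Pi.add_apply, add_mul, Finset.sum_add_distrib]
  map_smul' r x := by
    funext j
    simp only [RingHom.id_apply, Pi.smul_apply, smul_eq_mul, Finset.mul_sum]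
    exact Finset.sum_congr rfl fun i _ => by ring

/-- Matrix of the differential of the standard/augmented complex: the `b`-symbol
at (0-indexed) odd position `s` of `M` relates `T_s` and `T_{s+1}`. -/
def dCoef (M : List ℤ) (i j : ℕ) : R :=
  if i % 2 = 1 ∧ seqAt M i < 0 ∧ j = i + 1 then Uu ^ (seqAt M i).natAbs
  else if i % 2 = 0 ∧ 0 < i ∧ 0 < seqAt M (i - 1) ∧ j + 1 = i then
    Uu ^ (seqAt M (i - 1)).natAbs
  else 0

/-- Matrix of `ω = 1 + ι` on the standard/augmented complex: the `a`-symbol at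
(0-indexed) even position `s` of `M` relates `T_s` and `T_{s+1}`. -/
def wCoef (M : List ℤ) (i j : ℕ) : R :=
  if i % 2 = 0 ∧ seqAt M i = -1 ∧ j = i + 1 then 1
  else if i % 2 = 1 ∧ seqAt M (i - 1) = 1 ∧ j + 1 = i then 1
  else 0

/-- Matrix of `ι = 1 + ω` (char 2). -/
def iCoef (M : List ℤ) (i j : ℕ) : R :=
  (if i = j then 1 else 0) + wCoef M i j

/-- The standard (even length) or augmented (odd length) complex on generators
`T_0, …, T_{M.length}` determined by the symbol sequence `M`. -/
def symCplx (M : List ℤ) : PreAI :=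
  ⟨⟨M.length + 1, fun i => stdGr M i, ofMatrix (dCoef M)⟩, ofMatrix (iCoef M)⟩

/-- Validity of a standard parameter sequence. -/
def StdParams (M : List ℤ) : Prop :=
  M.length % 2 = 0 ∧
  ∀ i < M.length, if i % 2 = 0 then seqAt M i = 1 ∨ seqAt M i = -1 else seqAt M i ≠ 0

/-- Validity of an augmented parameter sequence. -/
def AugParams (M : List ℤ) : Prop :=
  M.length % 2 = 1 ∧
  ∀ i < M.length, if i % 2 = 0 then seqAt M i = 1 ∨ seqAt M i = -1 else seqAt M i ≠ 0

/-- The modified order `<!` on `ℤ`: `−1 <! −2 <! ⋯ <! 0 <! ⋯ <! 2 <! 1`. -/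
def ltB (x y : ℤ) : Prop :=
  (x < 0 ∧ 0 ≤ y) ∨ (x ≤ 0 ∧ 0 < y) ∨ (x < 0 ∧ y < 0 ∧ y < x) ∨ (0 < x ∧ 0 < y ∧ y < x)

def leB (x y : ℤ) : Prop := ltB x y ∨ x = y

/-- Strict lexicographic order on (zero-padded) parameter sequences. -/
def lexLt (M M' : List ℤ) : Prop :=
  ∃ k : ℕ, (∀ i < k, seqAt M i = seqAt M' i) ∧ ltB (seqAt M k) (seqAt M' k)

def lexLe (M M' : List ℤ) : Prop := lexLt M M' ∨ ∀ i, seqAt M i = seqAt M' i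

/-- A short map from the standard (even `M.length`) or augmented (odd `M.length`)
complex determined by `M` to `A`: the `ω`-condition (standard case) resp. the
`∂`-condition (augmented case) is waived on the final generator. -/
def isShortMap (M : List ℤ) (A : PreAI) (f : V (M.length + 1) →ₗ[R] V A.n) : Prop :=
  GradedMap (symCplx M).gr A.gr 0 f ∧
  (∀ i : Fin (M.length + 1), ((i : ℕ) < M.length ∨ M.length % 2 = 0) →
    A.d (f (e i)) = f ((symCplx M).d (e i))) ∧
  (∀ i : Fin (M.length + 1), ((i : ℕ) < M.length ∨ M.length % 2 = 1) →
    modU ((omega A) (f (e i)) + f ((omega (symCplx M)) (e i))))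

/-- A local short map: `T_0` goes to a `U`-nontorsion cycle class. -/
def isLocalShortMap (M : List ℤ) (A : PreAI) (f : V (M.length + 1) →ₗ[R] V A.n) : Prop :=
  isShortMap M A f ∧ NontorsionClass A.toPreCplx (f (e ⟨0, Nat.succ_pos _⟩))

/-- The sequence of invariants `s_i(A)` (1-indexed in the paper; 0-indexed here):
`s k` is the `≤!`-maximum of the `(k+1)`-st symbols among standard complexes
locally mapping to `A` whose first `k` symbols are `s 0, …, s (k-1)`. -/
def IsInvariantSeq (A : PreAI) (s : ℕ → ℤ) : Prop :=
  ∀ k : ℕ,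
    (∃ M : List ℤ, StdParams M ∧ (∃ f, isLocalMap (symCplx M) A f) ∧
      ∀ i ≤ k, seqAt M i = s i) ∧
    (∀ M : List ℤ, StdParams M → (∃ f, isLocalMap (symCplx M) A f) →
      (∀ i < k, seqAt M i = s i) → leB (seqAt M k) (s k))

/-- Reduction mod `U` of a linear map, as an `F₂`-linear map. -/
def mapHat {m n : ℕ} (f : V m →ₗ[R] V n) : (Fin m → F2) →ₗ[F2] (Fin n → F2) where
  toFun x := fun j => ∑ i : Fin m, x i * (f (e i) j).coeff 0
  map_add' x y := by
    funext j
    simp [Pi.add_apply, add_mul, Finset.sum_add_distrib]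
  map_smul' c x := by
    funext j
    simp only [RingHom.id_apply, Pi.smul_apply, smul_eq_mul, Finset.mul_sum]
    exact Finset.sum_congr rfl fun i _ => by ring

/-- The induced action `ω̂` on `C/U`. -/
def wHat (C : PreAI) : (Fin C.n → F2) →ₗ[F2] (Fin C.n → F2) := mapHat (omega C)

end AI

namespace AI

/-! ### Auxiliary lemmas -/

lemma F2_add_self (a : F2) : a + a = 0 := CharTwo.add_self_eq_zero a

lemma F2_eq_of_add_eq_zero {a b : F2} (h : a + b = 0) : a = b := by
  have hb := F2_add_self b
  linear_combination h - hb

lemma R_add_self (p : R) : p + p = 0 :=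
  Polynomial.ext fun n => by
    rw [Polynomial.coeff_add, F2_add_self, Polynomial.coeff_zero]

lemma sum_single {n : ℕ} (g : Fin n → R) (j0 : Fin n)
    (h : ∀ j : Fin n, j ≠ j0 → g j = 0) :
    ∑ j : Fin n, g j = g j0 :=
  Finset.sum_eq_single j0 (fun j _ hj => h j hj)
    (fun h' => absurd (Finset.mem_univ j0) h')

lemma ofMatrix_apply {n : ℕ} (c : ℕ → ℕ → R) (x : V n) (l : Fin n) :
    ofMatrix c x l = ∑ j : Fin n, x j * c j l := rfl

lemma ofMatrix_e {n : ℕ} (c : ℕ → ℕ → R) (i l : Fin n) :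
    ofMatrix c (e i) l = c i l := by
  rw [ofMatrix_apply, sum_single _ i (fun j hj => by simp [e, hj])]
  simp [e]

lemma basis_expand {n : ℕ} (x : V n) : x = ∑ j : Fin n, x j • e j := by
  funext l
  rw [Finset.sum_apply,
    sum_single _ l (fun j hj => by
      simp only [Pi.smul_apply, smul_eq_mul, e]
      rw [if_neg (Ne.symm hj), mul_zero])]
  simp [e]

lemma map_apply_eq_sum {m n : ℕ} (g : V m →ₗ[R] V n) (x : V m) (l : Fin n) :
    g x l = ∑ j : Fin m, x j * g (e j) l := by
  conv_lhs => rw [basis_expand x]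
  rw [map_sum, Finset.sum_apply]
  exact Finset.sum_congr rfl fun j _ => by rw [map_smul]; rfl

lemma dCoef_c0 (M : List ℤ) (i j : ℕ) : (dCoef M i j).coeff 0 = 0 := by
  unfold dCoef
  split_ifs with h1 h2
  · rw [Uu, Polynomial.coeff_X_pow, if_neg (by omega)]
  · rw [Uu, Polynomial.coeff_X_pow, if_neg (by omega)]
  · exact Polynomial.coeff_zero 0

lemma dCoef_col0 (M : List ℤ) (j : ℕ) : dCoef M j 0 = 0 := by
  unfold dCoef
  rw [if_neg (by omega), if_neg (by omega)]

lemma modU_map {m n : ℕ} (g : V m →ₗ[R] V n) (x : V m) (h : modU x) :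
    modU (g x) := by
  intro l
  rw [map_apply_eq_sum, Polynomial.finset_sum_coeff]
  exact Finset.sum_eq_zero fun j _ => by
    rw [Polynomial.mul_coeff_zero, h j, zero_mul]

lemma modU_d (M : List ℤ) (w : V (M.length + 1)) : modU ((symCplx M).d w) := by
  intro l
  rw [show (symCplx M).d w l = ∑ j, w j * dCoef M j l from rfl,
    Polynomial.finset_sum_coeff]
  exact Finset.sum_eq_zero fun j _ => by
    rw [Polynomial.mul_coeff_zero, dCoef_c0, mul_zero]

lemma iota_apply (M : List ℤ) (x : V (M.length + 1)) (l : Fin (M.length + 1)) :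
    (symCplx M).ι x l = x l + ∑ j, x j * wCoef M j l := by
  rw [show (symCplx M).ι x l = ∑ j, x j * iCoef M j l from rfl]
  unfold iCoef
  rw [Finset.sum_congr rfl (fun j _ => mul_add (x j) _ _), Finset.sum_add_distrib]
  congr 1
  rw [sum_single _ l (fun j hj => by
    rw [if_neg (fun h => hj (Fin.ext h)), mul_zero])]
  simp

lemma omega_apply (M : List ℤ) (x : V (M.length + 1)) (l : Fin (M.length + 1)) :
    omega (symCplx M) x l = ∑ j, x j * wCoef M j l := by
  have h1 : omega (symCplx M) x l = x l + (symCplx M).ι x l := by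
    unfold AI.omega
    rfl
  rw [h1, iota_apply, ← add_assoc, R_add_self, zero_add]

lemma stdGr_zero (M : List ℤ) : stdGr M 0 = 0 := by
  simp [stdGr]

lemma seqAt_natAbs_le (M : List ℤ) (i : ℕ) :
    (seqAt M i).natAbs ≤ ∑ s ∈ Finset.range M.length, (seqAt M s).natAbs := by
  by_cases h : i < M.length
  · exact Finset.single_le_sum (f := fun s => (seqAt M s).natAbs)
      (fun _ _ => Nat.zero_le _) (Finset.mem_range.mpr h)
  · have : seqAt M i = 0 := List.getD_eq_default _ _ (by omega)
    simp [this]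

lemma Upow_ne_zero (m : ℕ) : (Uu ^ m : R) ≠ 0 :=
  pow_ne_zero m Polynomial.X_ne_zero

end AI
namespace AI

lemma dCoef_eq_zero_of (M : List ℤ) (j c : ℕ)
    (h1 : ¬(j % 2 = 1 ∧ seqAt M j < 0 ∧ c = j + 1))
    (h2 : ¬(j % 2 = 0 ∧ 0 < j ∧ 0 < seqAt M (j - 1) ∧ c + 1 = j)) :
    dCoef M j c = 0 := by
  unfold dCoef
  rw [if_neg h1, if_neg h2]

lemma std_cycle_noT0_bdry (M : List ℤ) (hM : StdParams M) (x : V (M.length + 1))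
    (hc : IsCycle (symCplx M).toPreCplx x) (h0 : x ⟨0, Nat.succ_pos _⟩ = 0) :
    ∃ N : ℕ, IsBdry (symCplx M).toPreCplx ((Uu ^ N) • x) := by
  classical
  set N := ∑ s ∈ Finset.range M.length, (seqAt M s).natAbs with hN
  have hlenE := hM.1
  have hcyc : ∀ l : Fin (M.length + 1), ∑ j, x j * dCoef M j l = 0 :=
    fun l => congrFun hc l
  -- vanishing of components forced by the cycle condition
  have hA : ∀ l : Fin (M.length + 1), (l : ℕ) % 2 = 1 → seqAt M l < 0 → x l = 0 := by
    intro l hodd hneg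
    have hlt := l.isLt
    have hlen : (l : ℕ) < M.length := by omega
    set l1 : Fin (M.length + 1) := ⟨(l : ℕ) + 1, by omega⟩ with hl1
    have hl1v : (l1 : ℕ) = (l : ℕ) + 1 := rfl
    have h1 := hcyc l1
    rw [sum_single _ l (fun j hj => by
      have hjv : (j : ℕ) ≠ (l : ℕ) := fun h => hj (Fin.ext h)
      rw [dCoef_eq_zero_of M j l1 (by omega) (by omega), mul_zero])] at h1
    rw [show dCoef M l l1 = Uu ^ (seqAt M l).natAbs from by
      unfold dCoef; rw [if_pos ⟨hodd, hneg, hl1v⟩]] at h1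
    exact (mul_eq_zero.mp h1).resolve_right (Upow_ne_zero _)
  have hB : ∀ l : Fin (M.length + 1), (l : ℕ) % 2 = 0 → 0 < (l : ℕ) →
      0 < seqAt M ((l : ℕ) - 1) → x l = 0 := by
    intro l heven hpos hbpos
    set l1 : Fin (M.length + 1) := ⟨(l : ℕ) - 1, by omega⟩ with hl1
    have hl1v : (l1 : ℕ) = (l : ℕ) - 1 := rfl
    have h1 := hcyc l1
    rw [sum_single _ l (fun j hj => by
      have hjv : (j : ℕ) ≠ (l : ℕ) := fun h => hj (Fin.ext h)
      rw [dCoef_eq_zero_of M j l1 (by omega) (by omega), mul_zero])] at h1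
    rw [show dCoef M l l1 = Uu ^ (seqAt M ((l : ℕ) - 1)).natAbs from by
      unfold dCoef
      rw [if_neg (by omega), if_pos ⟨heven, hpos, hbpos, by omega⟩]] at h1
    exact (mul_eq_zero.mp h1).resolve_right (Upow_ne_zero _)
  set xx : ℕ → R := fun t => if h : t < M.length + 1 then x ⟨t, h⟩ else 0 with hxx
  have hxxv : ∀ l : Fin (M.length + 1), xx (l : ℕ) = x l := by
    intro l
    rw [hxx]
    simp only [l.isLt, dif_pos, Fin.eta]
  set y : V (M.length + 1) := fun j =>
    if (j : ℕ) % 2 = 1 ∧ seqAt M (j : ℕ) < 0 then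
      Uu ^ (N - (seqAt M (j : ℕ)).natAbs) * xx ((j : ℕ) + 1)
    else if (j : ℕ) % 2 = 0 ∧ 0 < (j : ℕ) ∧ 0 < seqAt M ((j : ℕ) - 1) then
      Uu ^ (N - (seqAt M ((j : ℕ) - 1)).natAbs) * xx ((j : ℕ) - 1)
    else 0 with hy
  refine ⟨N, y, ?_⟩
  funext (l : Fin (M.length + 1))
  rw [show ((Uu ^ N) • x) l = Uu ^ N * x l from rfl,
    show (symCplx M).d y l = ∑ j : Fin (M.length + 1), y j * dCoef M (j : ℕ) (l : ℕ) from rfl]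
  by_cases hl0 : (l : ℕ) = 0
  · rw [Finset.sum_eq_zero (fun j _ => by rw [hl0, dCoef_col0, mul_zero]),
      show l = ⟨0, Nat.succ_pos _⟩ from Fin.ext hl0, h0, mul_zero]
  by_cases hodd : (l : ℕ) % 2 = 1
  · -- odd column: only row l+1 can contribute
    have hlt : (l : ℕ) < M.length + 1 := l.isLt
    have hlen : (l : ℕ) < M.length := by omega
    set j0 : Fin (M.length + 1) := ⟨(l : ℕ) + 1, by omega⟩ with hj0
    have hj0v : (j0 : ℕ) = (l : ℕ) + 1 := rfl
    rw [sum_single _ j0 (fun j hj => by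
      have hjv : (j : ℕ) ≠ (l : ℕ) + 1 := fun h => hj (Fin.ext (h.trans hj0v.symm))
      rw [dCoef_eq_zero_of M j l (by omega) (by omega), mul_zero])]
    have hb := hM.2 (l : ℕ) hlen
    rw [if_neg (by omega)] at hb
    rcases lt_or_gt_of_ne hb with hbneg | hbpos
    · rw [hj0v, dCoef_eq_zero_of M ((l : ℕ) + 1) l (by omega)
        (by simp only [Nat.add_sub_cancel]; omega), mul_zero, hA l hodd hbneg, mul_zero]
    · have hle : (seqAt M (l : ℕ)).natAbs ≤ N := seqAt_natAbs_le M _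
      have hdv : dCoef M ((l : ℕ) + 1) l = Uu ^ (seqAt M (l : ℕ)).natAbs := by
        unfold dCoef
        rw [if_neg (by omega), if_pos ⟨by omega, by omega,
          by rw [Nat.add_sub_cancel]; exact hbpos, rfl⟩, Nat.add_sub_cancel]
      have hyv : y j0 = Uu ^ (N - (seqAt M (l : ℕ)).natAbs) * x l := by
        rw [hy]
        simp only [hj0v]
        rw [if_neg (by omega), if_pos ⟨by omega, by omega,
          by rw [Nat.add_sub_cancel]; exact hbpos⟩, Nat.add_sub_cancel, hxxv l]
      rw [hyv, hj0v, hdv, mul_comm, ← mul_assoc, ← pow_add, Nat.add_sub_cancel' hle]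
  · -- even positive column: only row l-1 can contribute
    have hlt : (l : ℕ) < M.length + 1 := l.isLt
    have hpos : 0 < (l : ℕ) := by omega
    set j0 : Fin (M.length + 1) := ⟨(l : ℕ) - 1, by omega⟩ with hj0
    have hj0v : (j0 : ℕ) = (l : ℕ) - 1 := rfl
    have hlen1 : (l : ℕ) - 1 < M.length := by omega
    rw [sum_single _ j0 (fun j hj => by
      have hjv : (j : ℕ) ≠ (l : ℕ) - 1 := fun h => hj (Fin.ext (h.trans hj0v.symm))
      rw [dCoef_eq_zero_of M j l (by omega) (by omega), mul_zero])]
    have hb := hM.2 ((l : ℕ) - 1) hlen1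
    rw [if_neg (by omega)] at hb
    rcases lt_or_gt_of_ne hb with hbneg | hbpos
    · have hle : (seqAt M ((l : ℕ) - 1)).natAbs ≤ N := seqAt_natAbs_le M _
      have hdv : dCoef M ((l : ℕ) - 1) l = Uu ^ (seqAt M ((l : ℕ) - 1)).natAbs := by
        unfold dCoef
        rw [if_pos ⟨by omega, hbneg, by omega⟩]
      have hyv : y j0 = Uu ^ (N - (seqAt M ((l : ℕ) - 1)).natAbs) * x l := by
        rw [hy]
        simp only [hj0v]
        rw [if_pos ⟨by omega, hbneg⟩,
          show (l : ℕ) - 1 + 1 = (l : ℕ) from by omega, hxxv l]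
      rw [hyv, hj0v, hdv, mul_comm, ← mul_assoc, ← pow_add, Nat.add_sub_cancel' hle]
    · rw [hj0v, dCoef_eq_zero_of M ((l : ℕ) - 1) l (by omega) (by omega), mul_zero,
        hB l (by omega) hpos hbpos, mul_zero]

end AI
namespace AI

lemma wCoef_eq_zero_of (M : List ℤ) (j c : ℕ)
    (h1 : ¬(j % 2 = 0 ∧ seqAt M j = -1 ∧ c = j + 1))
    (h2 : ¬(j % 2 = 1 ∧ seqAt M (j - 1) = 1 ∧ c + 1 = j)) :
    wCoef M j c = 0 := by
  unfold wCoef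
  rw [if_neg h1, if_neg h2]

lemma iota_e_of (M : List ℤ) (s t : Fin (M.length + 1))
    (h : ∀ l : Fin (M.length + 1), wCoef M (s : ℕ) (l : ℕ) = if l = t then 1 else 0) :
    (symCplx M).ι (e s) = e s + e t := by
  funext (l : Fin (M.length + 1))
  show ofMatrix (iCoef M) (e s) l = _
  rw [ofMatrix_e]
  unfold iCoef
  rw [h l, Pi.add_apply]
  congr 1
  show (if (s : ℕ) = (l : ℕ) then (1 : R) else 0) = e s l
  by_cases hls : l = s
  · rw [if_pos (congrArg Fin.val hls).symm, e, if_pos hls]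
  · rw [if_neg (fun hh => hls (Fin.ext hh.symm)), e, if_neg hls]

lemma d_e_of (M : List ℤ) (s t : Fin (M.length + 1)) (m : ℕ)
    (h : ∀ l : Fin (M.length + 1), dCoef M (s : ℕ) (l : ℕ) = if l = t then Uu ^ m else 0) :
    (symCplx M).d (e s) = (Uu ^ m) • e t := by
  funext (l : Fin (M.length + 1))
  show ofMatrix (dCoef M) (e s) l = ((Uu ^ m) • e t) l
  rw [ofMatrix_e, h l]
  by_cases hlt : l = t
  · simp [e, hlt]
  · simp [e, hlt]

theorem local_map_supported' (M M' : List ℤ) (hM : StdParams M) (hM' : StdParams M')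
    (k : ℕ) (hkM : k ≤ M.length) (hkM' : k ≤ M'.length)
    (hagree : ∀ i < k, seqAt M i = seqAt M' i)
    (f : V (M.length + 1) →ₗ[R] V (M'.length + 1))
    (hf : isLocalMap (symCplx M) (symCplx M') f) :
    ∀ i : ℕ, ∀ _hi : i ≤ k, ∀ h1 : i < M.length + 1, ∀ h2 : i < M'.length + 1,
      (f (e ⟨i, h1⟩) ⟨i, h2⟩).coeff 0 ≠ 0 := by
  classical
  obtain ⟨⟨hgr, hchain, hhtpy⟩, hloc⟩ := hf
  obtain ⟨H, hHgr, hH⟩ := hhtpy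
  have hMe := hM.1
  have hM'e := hM'.1
  -- consequence of the homotopy condition: f commutes with ι mod U
  have hmodeq : ∀ (v : V (M.length + 1)) (l : Fin (M'.length + 1)),
      ((f ((symCplx M).ι v)) l).coeff 0 + (((symCplx M').ι (f v)) l).coeff 0 = 0 := by
    intro (v : V (symCplx M).n) l
    have h1 := hH v l
    change (f ((symCplx M).ι v) l + (symCplx M').ι (f v) l + H ((symCplx M).d v) l
      + (symCplx M').d (H v) l).coeff 0 = 0 at h1
    simp only [Polynomial.coeff_add] at h1
    erw [modU_map H _ (modU_d M v) l, modU_d M' (H v) l, add_zero, add_zero] at h1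
    exact h1
  -- transfer along an ω-arrow
  have homotopy_step : ∀ (s t : Fin (M.length + 1)) (s' t' : Fin (M'.length + 1)),
      (symCplx M).ι (e s) = e s + e t →
      (∀ j : Fin (M'.length + 1), j ≠ s' → wCoef M' (j : ℕ) (t' : ℕ) = 0) →
      wCoef M' (s' : ℕ) (t' : ℕ) = 1 →
      (f (e t) t').coeff 0 = (f (e s) s').coeff 0 := by
    intro s t s' t' hι hside hmain
    have h1 := hmodeq (e s) t'
    erw [hι, map_add, iota_apply M' (f (e s)) t'] at h1
    rw [sum_single (fun j : Fin (M'.length + 1) => f (e s) j * wCoef M' (j : ℕ) (t' : ℕ))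
      s' (fun j hj => by
        show f (e s) j * wCoef M' (j : ℕ) (t' : ℕ) = 0
        rw [hside j hj, mul_zero]), hmain, mul_one] at h1
    simp only [Pi.add_apply, Polynomial.coeff_add] at h1
    linear_combination h1 - F2_add_self ((f (e s) t').coeff 0)
      - F2_add_self ((f (e s) s').coeff 0)
  -- transfer along a ∂-arrow
  have chain_step : ∀ (s t : Fin (M.length + 1)) (s' t' : Fin (M'.length + 1)) (m : ℕ),
      (symCplx M).d (e s) = (Uu ^ m) • e t →
      (∀ j : Fin (M'.length + 1), j ≠ s' → dCoef M' (j : ℕ) (t' : ℕ) = 0) →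
      dCoef M' (s' : ℕ) (t' : ℕ) = Uu ^ m →
      f (e t) t' = f (e s) s' := by
    intro s t s' t' m hd hside hmain
    have h2 := congrFun (LinearMap.congr_fun hchain (e s)) t'
    have hL : (f ∘ₗ (symCplx M).d) (e s) t' = Uu ^ m * f (e t) t' := by
      show f ((symCplx M).d (e s)) t' = _
      rw [hd, map_smul]
      rfl
    have hR : ((symCplx M').d ∘ₗ f) (e s) t' = f (e s) s' * Uu ^ m := by
      show (∑ j : Fin (M'.length + 1), f (e s) j * dCoef M' (j : ℕ) (t' : ℕ)) = _
      rw [sum_single (fun j : Fin (M'.length + 1) => f (e s) j * dCoef M' (j : ℕ) (t' : ℕ))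
        s' (fun j hj => by
          show f (e s) j * dCoef M' (j : ℕ) (t' : ℕ) = 0
          rw [hside j hj, mul_zero]), hmain]
    have h3 := hL.symm.trans (h2.trans hR)
    rw [mul_comm (f (e s) s')] at h3
    exact mul_left_cancel₀ (Upow_ne_zero m) h3
  intro i
  induction i with
  | zero =>
    intro _ hb1 hb2
    set e0 : Fin (M.length + 1) := ⟨0, hb1⟩ with he0
    set e0' : Fin (M'.length + 1) := ⟨0, hb2⟩ with he0'
    have he0v : (e0 : ℕ) = 0 := rfl
    have hcyc0 : IsCycle (symCplx M).toPreCplx (e e0) := by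
      funext (l : Fin (M.length + 1))
      show ofMatrix (dCoef M) (e e0) l = 0
      rw [ofMatrix_e]
      exact dCoef_eq_zero_of M _ _ (by omega) (by omega)
    have hnt0 : NontorsionClass (symCplx M).toPreCplx (e e0) := by
      refine ⟨hcyc0, ?_⟩
      rintro N ⟨y, hy⟩
      have h2 := congrFun hy e0
      erw [show (symCplx M).d y e0
          = ∑ j : Fin (M.length + 1), y j * dCoef M (j : ℕ) (e0 : ℕ) from rfl,
        Finset.sum_eq_zero (fun j _ => by rw [he0v, dCoef_col0, mul_zero]),
        show ((Uu ^ N) • e e0) e0 = Uu ^ N * e e0 e0 from rfl,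
        show e e0 e0 = 1 from if_pos rfl, mul_one] at h2
      exact Upow_ne_zero N h2.symm
    have hnt := hloc _ hnt0
    intro hc0
    have hx0 : f (e e0) e0' = 0 := by
      apply Polynomial.ext
      intro m
      rcases Nat.eq_zero_or_pos m with hm | hm
      · rw [hm, Polynomial.coeff_zero]; exact hc0
      · by_contra hne
        have hh := hgr e0 e0' m hne
        rw [show (symCplx M').gr e0' = stdGr M' 0 from rfl,
          show (symCplx M).gr e0 = stdGr M 0 from rfl, stdGr_zero, stdGr_zero] at hh
        omega
    obtain ⟨N, hbdry⟩ := std_cycle_noT0_bdry M' hM' (f (e e0)) hnt.1 hx0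
    exact hnt.2 N hbdry
  | succ i ih =>
    intro hik hb1 hb2
    have hi : i < k := hik
    have ihv := ih (Nat.le_of_lt hi) (by omega) (by omega)
    have hiM : i < M.length := lt_of_lt_of_le hi hkM
    have hiM' : i < M'.length := lt_of_lt_of_le hi hkM'
    have hag : seqAt M' i = seqAt M i := (hagree i hi).symm
    set s0 : Fin (M.length + 1) := ⟨i, by omega⟩ with hs0
    set s1 : Fin (M.length + 1) := ⟨i + 1, hb1⟩ with hs1
    set t0 : Fin (M'.length + 1) := ⟨i, by omega⟩ with ht0
    set t1 : Fin (M'.length + 1) := ⟨i + 1, hb2⟩ with ht1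
    have hs0v : (s0 : ℕ) = i := rfl
    have hs1v : (s1 : ℕ) = i + 1 := rfl
    have ht0v : (t0 : ℕ) = i := rfl
    have ht1v : (t1 : ℕ) = i + 1 := rfl
    show (f (e s1) t1).coeff 0 ≠ 0
    by_cases hpar : i % 2 = 0
    · -- ω-arrow
      have haval := hM.2 i hiM
      rw [if_pos hpar] at haval
      rcases haval with ha1 | ham1
      · -- a = +1 : ω T_{i+1} = T_i
        have hι : (symCplx M).ι (e s1) = e s1 + e s0 := by
          apply iota_e_of
          intro l
          unfold wCoef
          simp only [hs1v]
          by_cases hc : (l : ℕ) = i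
          · rw [if_neg (by omega), if_pos ⟨by omega,
              by rw [Nat.add_sub_cancel]; exact ha1, by omega⟩, if_pos (Fin.ext hc)]
          · rw [if_neg (by omega), if_neg (by omega),
              if_neg (fun hh => hc (congrArg Fin.val hh))]
        have hmain : wCoef M' (t1 : ℕ) (t0 : ℕ) = 1 := by
          show wCoef M' (i + 1) i = 1
          unfold wCoef
          rw [if_neg (by omega), if_pos ⟨by omega,
            by rw [Nat.add_sub_cancel, hag]; exact ha1, rfl⟩]
        have hside : ∀ j : Fin (M'.length + 1), j ≠ t1 → wCoef M' (j : ℕ) (t0 : ℕ) = 0 := by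
          intro j hj
          have hjv : (j : ℕ) ≠ i + 1 := fun h => hj (Fin.ext (h.trans ht1v.symm))
          exact wCoef_eq_zero_of M' _ _ (by omega) (by omega)
        rw [← homotopy_step s1 s0 t1 t0 hι hside hmain]
        exact ihv
      · -- a = -1 : ω T_i = T_{i+1}
        have hι : (symCplx M).ι (e s0) = e s0 + e s1 := by
          apply iota_e_of
          intro l
          unfold wCoef
          simp only [hs0v]
          by_cases hc : (l : ℕ) = i + 1
          · rw [if_pos ⟨hpar, ham1, hc⟩, if_pos (Fin.ext hc)]
          · rw [if_neg (fun hh => hc hh.2.2), if_neg (by omega),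
              if_neg (fun hh => hc (congrArg Fin.val hh))]
        have hmain : wCoef M' (t0 : ℕ) (t1 : ℕ) = 1 := by
          show wCoef M' i (i + 1) = 1
          unfold wCoef
          rw [if_pos ⟨hpar, by rw [hag]; exact ham1, rfl⟩]
        have hside : ∀ j : Fin (M'.length + 1), j ≠ t0 → wCoef M' (j : ℕ) (t1 : ℕ) = 0 := by
          intro j hj
          have hjv : (j : ℕ) ≠ i := fun h => hj (Fin.ext (h.trans ht0v.symm))
          exact wCoef_eq_zero_of M' _ _ (by omega) (by omega)
        rw [homotopy_step s0 s1 t0 t1 hι hside hmain]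
        exact ihv
    · -- ∂-arrow
      have hodd : i % 2 = 1 := by omega
      have hbval := hM.2 i hiM
      rw [if_neg (by omega)] at hbval
      rcases lt_or_gt_of_ne hbval with hbneg | hbpos
      · -- b < 0 : ∂ T_i = U^{|b|} T_{i+1}
        have hd : (symCplx M).d (e s0) = (Uu ^ (seqAt M i).natAbs) • e s1 := by
          apply d_e_of
          intro l
          unfold dCoef
          simp only [hs0v]
          by_cases hc : (l : ℕ) = i + 1
          · rw [if_pos ⟨hodd, hbneg, hc⟩, if_pos (Fin.ext hc)]
          · rw [if_neg (fun hh => hc hh.2.2), if_neg (by omega),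
              if_neg (fun hh => hc (congrArg Fin.val hh))]
        have hmain : dCoef M' (t0 : ℕ) (t1 : ℕ) = Uu ^ (seqAt M i).natAbs := by
          show dCoef M' i (i + 1) = _
          unfold dCoef
          rw [if_pos ⟨hodd, by rw [hag]; exact hbneg, rfl⟩, hag]
        have hside : ∀ j : Fin (M'.length + 1), j ≠ t0 → dCoef M' (j : ℕ) (t1 : ℕ) = 0 := by
          intro j hj
          have hjv : (j : ℕ) ≠ i := fun h => hj (Fin.ext (h.trans ht0v.symm))
          exact dCoef_eq_zero_of M' _ _ (by omega) (by omega)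
        rw [chain_step s0 s1 t0 t1 _ hd hside hmain]
        exact ihv
      · -- b > 0 : ∂ T_{i+1} = U^{b} T_i
        have hd : (symCplx M).d (e s1) = (Uu ^ (seqAt M i).natAbs) • e s0 := by
          apply d_e_of
          intro l
          unfold dCoef
          simp only [hs1v]
          by_cases hc : (l : ℕ) = i
          · rw [if_neg (by omega), if_pos ⟨by omega, by omega,
              by rw [Nat.add_sub_cancel]; exact hbpos, by omega⟩,
              Nat.add_sub_cancel, if_pos (Fin.ext hc)]
          · rw [if_neg (by omega), if_neg (by omega),
              if_neg (fun hh => hc (congrArg Fin.val hh))]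
        have hmain : dCoef M' (t1 : ℕ) (t0 : ℕ) = Uu ^ (seqAt M i).natAbs := by
          show dCoef M' (i + 1) i = _
          unfold dCoef
          rw [if_neg (by omega), if_pos ⟨by omega, by omega,
            by rw [Nat.add_sub_cancel, hag]; exact hbpos, rfl⟩,
            Nat.add_sub_cancel, hag]
        have hside : ∀ j : Fin (M'.length + 1), j ≠ t1 → dCoef M' (j : ℕ) (t0 : ℕ) = 0 := by
          intro j hj
          have hjv : (j : ℕ) ≠ i + 1 := fun h => hj (Fin.ext (h.trans ht1v.symm))
          exact dCoef_eq_zero_of M' _ _ (by omega) (by omega)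
        rw [← chain_step s1 s0 t1 t0 _ hd hside hmain]
        exact ihv

/-- rigidity of local maps between standard complexes with a
common prefix: if the parameter sequences agree up to index `k` and `f` is
local, then `f(T_i)` is supported by `T_i'` for all `0 ≤ i ≤ k`. -/
theorem local_map_supported (M M' : List ℤ) (hM : StdParams M) (hM' : StdParams M')
    (k : ℕ) (hkM : k ≤ M.length) (hkM' : k ≤ M'.length)
    (hagree : ∀ i < k, seqAt M i = seqAt M' i)
    (f : V (M.length + 1) →ₗ[R] V (M'.length + 1))
    (hf : isLocalMap (symCplx M) (symCplx M') f) :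
    ∀ i : ℕ, ∀ _hi : i ≤ k, f (e ⟨i, by omega⟩) ⟨i, by omega⟩ ≠ 0 := by
  intro i hi hzero
  exact local_map_supported' M M' hM hM' k hkM hkM' hagree f hf i hi (by omega) (by omega)
    (by rw [hzero, Polynomial.coeff_zero])

end AI
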